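/- Let Σ_x be a real n×n positive semidefinite matrix, Φ a real ℓ×n matrix, and Σ := Σ_x^{1/2}·Φᵀ·Φ·Σ_x^{1/2}. If rank(Σ) < rank(Σ_x), then there exists a real number L > 0 such that MMSE(σ²) tends to L as σ² → 0⁺; that is, the MMSE exhibits a strictly positive error floor. -/

import Mathlib

open Matrix Filter Topology

/-- The positive semidefinite square root of a positive semidefinite matrix
(the definition `Matrix.PosSemidef.sqrt` of the older Mathlib, since removed). -/
noncomputable def Matrix.PosSemidef.sqrt {n : Type*} [Fintype n] [DecidableEq n]
    {𝕜 : Type*} [RCLike 𝕜] [PartialOrder 𝕜] [StarOrderedRing 𝕜] {A : Matrix n n 𝕜} (hA : A.PosSemidef) : Matrix n n 𝕜 :=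
  hA.1.eigenvectorUnitary.1 * diagonal ((↑) ∘ (√·) ∘ hA.1.eigenvalues) *
  (star hA.1.eigenvectorUnitary : Matrix n n 𝕜)

lemma stmt5_posSemidef_sqrt {m : ℕ} {A : Matrix (Fin m) (Fin m) ℝ} (hA : A.PosSemidef) :
    hA.sqrt.PosSemidef := by
  unfold Matrix.PosSemidef.sqrt
  rw [star_eq_conjTranspose]
  apply PosSemidef.mul_mul_conjTranspose_same
  apply posSemidef_diagonal_iff.mpr
  intro i
  simp [Real.sqrt_nonneg]

lemma stmt5_sqrt_mul_self {m : ℕ} {A : Matrix (Fin m) (Fin m) ℝ} (hA : A.PosSemidef) :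
    hA.sqrt * hA.sqrt = A := by
  unfold Matrix.PosSemidef.sqrt
  have hUU' : star (hA.1.eigenvectorUnitary : Matrix (Fin m) (Fin m) ℝ) *
      (hA.1.eigenvectorUnitary : Matrix (Fin m) (Fin m) ℝ) = 1 :=
    mem_unitaryGroup_iff'.mp hA.1.eigenvectorUnitary.2
  conv_rhs => rw [hA.1.spectral_theorem]
  simp only [Matrix.mul_assoc]
  rw [Unitary.conjStarAlgAut_apply]
  rw [← Matrix.mul_assoc (star _) _ (_ * _), hUU', Matrix.one_mul, ← Matrix.mul_assoc,
    ← Matrix.mul_assoc, Matrix.mul_assoc _ (diagonal _) (diagonal _), diagonal_mul_diagonal]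
  congr 3
  funext i
  simp [Real.mul_self_sqrt (hA.eigenvalues_nonneg i)]

/-- If rank(Σ) < rank(Σ_x), with Σ = Σ_x^{1/2}·Φᵀ·Φ·Σ_x^{1/2}, then the MMSE
tends, as σ² → 0⁺, to a strictly positive error floor L > 0. -/
theorem stmt_5 {n l : ℕ} (Sx : Matrix (Fin n) (Fin n) ℝ) (hSx : Sx.PosSemidef)
    (Φ : Matrix (Fin l) (Fin n) ℝ)
    (hrank : (hSx.sqrt * Φᵀ * Φ * hSx.sqrt).rank < Sx.rank) :
    ∃ L : ℝ, 0 < L ∧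
      Tendsto (fun σ2 : ℝ =>
          (Sx - Sx * Φᵀ * (σ2 • (1 : Matrix (Fin l) (Fin l) ℝ) + Φ * Sx * Φᵀ)⁻¹ * Φ * Sx).trace)
        (nhdsWithin 0 (Set.Ioi 0)) (nhds L) := by
  classical
  set S := hSx.sqrt with hSdef
  have hS : S.PosSemidef := stmt5_posSemidef_sqrt hSx
  have hSS : S * S = Sx := stmt5_sqrt_mul_self hSx
  have hST : Sᵀ = S := by
    rw [← conjTranspose_eq_transpose_of_trivial]; exact hS.isHermitian
  set A := Φ * S with hAdef
  have hAT : Aᵀ = S * Φᵀ := by rw [hAdef, transpose_mul, hST]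
  have hSigEq : S * Φᵀ * Φ * S = Aᵀ * A := by
    rw [hAT, hAdef]; simp [Matrix.mul_assoc]
  have hSig : (S * Φᵀ * Φ * S).PosSemidef := by
    have h := posSemidef_conjTranspose_mul_self A
    rwa [conjTranspose_eq_transpose_of_trivial, ← hSigEq] at h
  have hH : (S * Φᵀ * Φ * S).IsHermitian := hSig.isHermitian
  set U : Matrix (Fin n) (Fin n) ℝ := (hH.eigenvectorUnitary : Matrix (Fin n) (Fin n) ℝ) with hUdef
  set d : Fin n → ℝ := hH.eigenvalues with hddef
  have hd0 : ∀ i, 0 ≤ d i := hSig.eigenvalues_nonneg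
  have hUU : U * star U = 1 := mem_unitaryGroup_iff.mp hH.eigenvectorUnitary.2
  have hUU' : star U * U = 1 := mem_unitaryGroup_iff'.mp hH.eigenvectorUnitary.2
  have hspec : S * Φᵀ * Φ * S = U * diagonal d * star U := by
    have h := hH.spectral_theorem
    rwa [RCLike.ofReal_real_eq_id, Function.id_comp] at h
  have hspecA : Aᵀ * A = U * diagonal d * star U := hSigEq ▸ hspec
  set M := star U * Sx * U with hMdef
  have hM : M.PosSemidef := by
    have h := hSx.conjTranspose_mul_mul_same U
    rwa [← star_eq_conjTranspose] at h
  -- key formula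
  have key : ∀ σ2 : ℝ, 0 < σ2 →
      (Sx - Sx * Φᵀ * (σ2 • (1 : Matrix (Fin l) (Fin l) ℝ) + Φ * Sx * Φᵀ)⁻¹ * Φ * Sx).trace
        = ∑ i, σ2 / (σ2 + d i) * M i i := by
    intro σ2 hσ
    set B := σ2 • (1 : Matrix (Fin l) (Fin l) ℝ) + Φ * Sx * Φᵀ with hBdef
    set C := σ2 • (1 : Matrix (Fin n) (Fin n) ℝ) + Aᵀ * A with hCdef
    have hBps : (Φ * Sx * Φᵀ).PosSemidef := by
      have h := hSx.mul_mul_conjTranspose_same Φ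
      rwa [conjTranspose_eq_transpose_of_trivial] at h
    have hsmB : (σ2 • (1 : Matrix (Fin l) (Fin l) ℝ)).PosDef := by
      rw [smul_one_eq_diagonal]; exact posDef_diagonal_iff.mpr fun _ => hσ
    have hsmC : (σ2 • (1 : Matrix (Fin n) (Fin n) ℝ)).PosDef := by
      rw [smul_one_eq_diagonal]; exact posDef_diagonal_iff.mpr fun _ => hσ
    have hB : B.PosDef := hsmB.add_posSemidef hBps
    have hC : C.PosDef := hsmC.add_posSemidef (hSigEq ▸ hSig)
    have hBdet : IsUnit B.det := hB.det_pos.ne'.isUnit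
    have hCdet : IsUnit C.det := hC.det_pos.ne'.isUnit
    have hBi : B * B⁻¹ = 1 := mul_nonsing_inv _ hBdet
    have hCi : C⁻¹ * C = 1 := nonsing_inv_mul _ hCdet
    -- swap identity
    have hΦSx : Φ * Sx * Φᵀ = A * Aᵀ := by
      rw [hAT, hAdef, ← hSS]; simp [Matrix.mul_assoc]
    have hswap : Aᵀ * B = C * Aᵀ := by
      rw [hBdef, hCdef, hΦSx]
      simp [Matrix.mul_add, Matrix.add_mul, Matrix.mul_assoc, Matrix.mul_smul, Matrix.smul_mul]
    have hkey2 : Aᵀ * B⁻¹ = C⁻¹ * Aᵀ := by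
      have h : C⁻¹ * ((Aᵀ * B) * B⁻¹) = C⁻¹ * ((C * Aᵀ) * B⁻¹) := by rw [hswap]
      rw [Matrix.mul_assoc Aᵀ B B⁻¹, hBi, Matrix.mul_one, ← Matrix.mul_assoc,
        ← Matrix.mul_assoc, hCi, Matrix.one_mul] at h
      exact h.symm
    -- diagonalization of C⁻¹ * (Aᵀ * A)
    set g : Fin n → ℝ := fun i => d i / (σ2 + d i) with hgdef
    have hconj : ∀ E G : Matrix (Fin n) (Fin n) ℝ,
        (U * E * star U) * (U * G * star U) = U * (E * G) * star U := by
      intro E G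
      have h1 : star U * (U * (G * star U)) = G * star U := by
        rw [← Matrix.mul_assoc, hUU', Matrix.one_mul]
      simp only [Matrix.mul_assoc, h1]
    have hCU : C = U * (σ2 • 1 + diagonal d) * star U := by
      rw [hCdef, hspecA, Matrix.mul_add, Matrix.add_mul, Matrix.mul_smul,
        Matrix.mul_one, Matrix.smul_mul, hUU]
    have hEG : (σ2 • (1 : Matrix (Fin n) (Fin n) ℝ) + diagonal d) * diagonal g
        = diagonal d := by
      rw [smul_one_eq_diagonal, diagonal_add, diagonal_mul_diagonal]
      have h4 : (fun i => (σ2 + d i) * g i) = d := by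
        funext i
        have hne : σ2 + d i ≠ 0 := (add_pos_of_pos_of_nonneg hσ (hd0 i)).ne'
        rw [hgdef, mul_comm]
        exact div_mul_cancel₀ _ hne
      exact congrArg diagonal h4
    have hCW : C * (U * diagonal g * star U) = Aᵀ * A := by
      rw [hCU, hconj, hEG, hspecA]
    have hW : C⁻¹ * (Aᵀ * A) = U * diagonal g * star U := by
      rw [← hCW, ← Matrix.mul_assoc, hCi, Matrix.one_mul]
    -- trace of the correction term
    have hY : Sx * Φᵀ * B⁻¹ * Φ * Sx = S * (C⁻¹ * (Aᵀ * A)) * S := by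
      have h2 : Sx * Φᵀ * B⁻¹ * Φ * Sx = S * ((Aᵀ * B⁻¹) * A) * S := by
        rw [← hSS, hAT, hAdef]; simp only [Matrix.mul_assoc]
      rw [h2, hkey2]; simp only [Matrix.mul_assoc]
    have hYtr : (Sx * Φᵀ * B⁻¹ * Φ * Sx).trace = ∑ i, g i * M i i := by
      rw [hY, hW, trace_mul_cycle, hSS]
      have e1 : Sx * (U * diagonal g * star U) = (Sx * U) * (diagonal g * star U) := by
        simp only [Matrix.mul_assoc]
      have e2 : (diagonal g * star U) * (Sx * U) = diagonal g * M := by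
        rw [hMdef]; simp only [Matrix.mul_assoc]
      rw [e1, trace_mul_comm, e2]
      simp [Matrix.trace, Matrix.diag, Matrix.diagonal_mul]
    have htrM : Sx.trace = ∑ i, M i i := by
      have h3 : M.trace = Sx.trace := by
        rw [hMdef, trace_mul_cycle, hUU, Matrix.one_mul]
      rw [← h3]
      simp [Matrix.trace, Matrix.diag]
    rw [trace_sub, hYtr, htrM, ← Finset.sum_sub_distrib]
    refine Finset.sum_congr rfl fun i _ => ?_
    have hne : σ2 + d i ≠ 0 := (add_pos_of_pos_of_nonneg hσ (hd0 i)).ne'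
    rw [hgdef]
    field_simp
    ring
  -- the limit value
  set L : ℝ := ∑ i, (if d i = 0 then M i i else 0) with hLdef
  have hMnn : ∀ i, 0 ≤ M i i := by
    intro i
    exact hM.diag_nonneg
  have hLnn : 0 ≤ L := by
    rw [hLdef]
    refine Finset.sum_nonneg fun i _ => ?_
    split_ifs with h
    · exact hMnn i
    · exact le_rfl
  have hUdet : IsUnit U.det := by
    apply IsUnit.of_mul_eq_one (star U).det
    rw [← det_mul, hUU, det_one]
  have hLne : L ≠ 0 := by
    intro hL0
    have hzero : ∀ i, d i = 0 → M i i = 0 := by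
      intro i hdi
      have h5 := (Finset.sum_eq_zero_iff_of_nonneg
        (fun j _ => (by split_ifs with h; exacts [hMnn j, le_rfl] :
          (0:ℝ) ≤ if d j = 0 then M j j else 0))).mp (hLdef ▸ hL0) i (Finset.mem_univ i)
      simpa [hdi] using h5
    set N := S * U with hNdef
    have hMN : M = Nᴴ * N := by
      rw [hMdef, ← hSS, hNdef, conjTranspose_mul, hS.isHermitian, ← star_eq_conjTranspose]
      simp only [Matrix.mul_assoc]
    have hcol : ∀ i, d i = 0 → ∀ k, N k i = 0 := by
      intro i hdi k
      have h6 : ∑ k, N k i * N k i = 0 := by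
        have h7 := hzero i hdi
        rw [hMN, Matrix.mul_apply] at h7
        simpa [Matrix.conjTranspose_apply] using h7
      have h8 := (Finset.sum_eq_zero_iff_of_nonneg
        (fun j _ => mul_self_nonneg (N j i))).mp h6 k (Finset.mem_univ k)
      exact mul_self_eq_zero.mp h8
    set e : Fin n → ℝ := fun i => if d i = 0 then 0 else 1 with hedef
    have hNe : N = N * diagonal e := by
      ext k j
      rw [Matrix.mul_diagonal]
      by_cases hdj : d j = 0
      · rw [hcol j hdj k]; simp [hedef, hdj]
      · simp [hedef, hdj]
    have hrkN : N.rank ≤ (diagonal e).rank := by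
      conv_lhs => rw [hNe]
      exact rank_mul_le_right _ _
    have hcard : (diagonal e).rank = (S * Φᵀ * Φ * S).rank := by
      rw [rank_diagonal, hH.rank_eq_card_non_zero_eigs]
      refine Fintype.card_congr (Equiv.subtypeEquivRight fun i => ?_)
      by_cases hdi : d i = 0 <;> simp [hedef, hdi, hddef]
    have hrkS : Sx.rank = N.rank := by
      have h10 : Sx = Sᴴ * S := by rw [hS.isHermitian, hSS]
      rw [hNdef, rank_mul_eq_left_of_isUnit_det U S hUdet, h10,
        rank_conjTranspose_mul_self]
    have h11 : Sx.rank ≤ (S * Φᵀ * Φ * S).rank := by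
      rw [hrkS, ← hcard]; exact hrkN
    have h12 : (hSx.sqrt * Φᵀ * Φ * hSx.sqrt).rank < Sx.rank := hrank
    rw [← hSdef] at h12
    exact absurd h12 (not_lt.mpr h11)
  have hLpos : 0 < L := lt_of_le_of_ne hLnn (Ne.symm hLne)
  refine ⟨L, hLpos, ?_⟩
  have hsum : Tendsto (fun σ2 : ℝ => ∑ i, σ2 / (σ2 + d i) * M i i)
      (nhdsWithin 0 (Set.Ioi 0)) (nhds L) := by
    rw [hLdef]
    refine tendsto_finset_sum _ fun i _ => ?_
    by_cases hdi : d i = 0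
    · rw [if_pos hdi]
      refine Tendsto.congr' ?_ tendsto_const_nhds
      filter_upwards [self_mem_nhdsWithin] with x hx
      rw [hdi, add_zero, div_self (ne_of_gt hx), one_mul]
    · rw [if_neg hdi]
      have hdpos : 0 < d i := lt_of_le_of_ne (hd0 i) (Ne.symm hdi)
      have h9 : Tendsto (fun x : ℝ => x / (x + d i) * M i i) (nhds 0)
          (nhds (0 / (0 + d i) * M i i)) := by
        refine Tendsto.mul_const _ (Tendsto.div tendsto_id
          (tendsto_id.add tendsto_const_nhds) ?_)
        rw [zero_add]; exact hdpos.ne'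
      simpa using h9.mono_left nhdsWithin_le_nhds
  refine Tendsto.congr' ?_ hsum
  filter_upwards [self_mem_nhdsWithin] with x hx
  exact (key x hx).symm
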